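/- Let q, a, x, u, y ∈ ℂ with 0 < |q| < 1, |u| ≤ 1, |a y| < 1, x ≠ 0, and 1 - a q^j x ≠ 0 for all j ≥ 0, and let n ∈ ℕ. Then T(y D_q|u) applied to the function t ↦ t^n/(a t;q)_n, evaluated at x, equals (1/(a x;q)_n) · ∑_{i=0}^{n} [n choose i]_q u^{C(i,2)} ((a x;q)_i/(a q^n x;q)_i) x^{n-i} y^i · ∑_{m=0}^{∞} u^{C(m,2)} (q^n;q)_m (u^i a y)^m / ((q;q)_m (a q^{n+i} x;q)_m), all series converging absolutely. -/

import Mathlib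

/-- The finite q-shifted factorial (a;q)_n = ∏_{j=0}^{n-1} (1 - a q^j). -/
noncomputable def qPoch (q a : ℂ) (n : ℕ) : ℂ :=
  ∏ j ∈ Finset.range n, (1 - a * q ^ j)

/-- The q-binomial coefficient [n choose k]_q = (q;q)_n / ((q;q)_k (q;q)_{n-k}). -/
noncomputable def qBinom (q : ℂ) (n k : ℕ) : ℂ :=
  qPoch q q n / (qPoch q q k * qPoch q q (n - k))

/-- The q-differential operator: (D_q f)(x) = (f(x) - f(qx))/x. -/
noncomputable def Dq (q : ℂ) (f : ℂ → ℂ) : ℂ → ℂ :=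
  fun x => (f x - f (q * x)) / x

/-- The deformed q-exponential operator:
T(y D_q|u) f(x) = ∑_{m≥0} u^{C(m,2)} (y^m/(q;q)_m) (D_q^m f)(x). -/
noncomputable def Tq (q u y : ℂ) (f : ℂ → ℂ) (x : ℂ) : ℂ :=
  ∑' m : ℕ, u ^ (m.choose 2) * (y ^ m / qPoch q q m) * ((Dq q)^[m] f x)

lemma qPoch_zero (q a : ℂ) : qPoch q a 0 = 1 := Finset.prod_range_zero _

lemma qPoch_succ (q a : ℂ) (m : ℕ) : qPoch q a (m+1) = qPoch q a m * (1 - a * q^m) :=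
  Finset.prod_range_succ _ _

lemma qPoch_add (q a : ℂ) (m k : ℕ) : qPoch q a (m+k) = qPoch q a m * qPoch q (a * q^m) k := by
  unfold qPoch
  rw [Finset.prod_range_add]
  congr 1
  exact Finset.prod_congr rfl fun j _ => by rw [pow_add]; ring

lemma qPoch_shift (q b : ℂ) (m : ℕ) : qPoch q b (m+1) = qPoch q (b*q) m * (1 - b) := by
  unfold qPoch
  rw [Finset.prod_range_succ']
  congr 1
  · exact Finset.prod_congr rfl fun j _ => by rw [pow_succ']; ring
  · simp

lemma qq_ne_zero {q : ℂ} (hq1 : ‖q‖ < 1) (m : ℕ) : qPoch q q m ≠ 0 := by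
  unfold qPoch
  rw [Finset.prod_ne_zero_iff]
  intro j _
  rw [sub_ne_zero]
  intro hq
  have h1 : ‖q * q ^ j‖ < 1 := by
    rw [norm_mul, norm_pow]
    calc ‖q‖ * ‖q‖ ^ j ≤ ‖q‖ * 1 := by
          apply mul_le_mul_of_nonneg_left (pow_le_one₀ (norm_nonneg q) hq1.le) (norm_nonneg q)
      _ < 1 := by simpa using hq1
  rw [← hq] at h1; simp at h1

lemma qPoch_x_ne_zero {q a x : ℂ} (h : ∀ j : ℕ, 1 - a * q ^ j * x ≠ 0) (s k : ℕ) :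
    qPoch q (a * q^s * x) k ≠ 0 := by
  unfold qPoch
  rw [Finset.prod_ne_zero_iff]
  intro j _
  have := h (s + j)
  rw [pow_add] at this
  convert this using 2
  ring

lemma qPoch_ax_ne_zero {q a x : ℂ} (h : ∀ j : ℕ, 1 - a * q ^ j * x ≠ 0) (k : ℕ) :
    qPoch q (a * x) k ≠ 0 := by
  have := qPoch_x_ne_zero h 0 k
  simpa using this

noncomputable def eAux (q : ℂ) (n : ℕ) : ℕ → ℕ → ℂ
  | 0, i => if i = 0 then 1 else 0
  | (M+1), 0 => eAux q n M 0 * (1 - q^(n+M))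
  | (M+1), (i+1) => eAux q n M i * (1 - q^(n-i)) + eAux q n M (i+1) * q^(i+1) * (1 - q^(n+M-(i+1)))

lemma eAux_gt_n (q : ℂ) (n : ℕ) : ∀ M i, n < i → eAux q n M i = 0 := by
  intro M
  induction M with
  | zero => intro i hi; simp [eAux]; omega
  | succ M ih =>
    intro i hi
    match i, hi with
    | (i+1), hi =>
      rw [eAux]
      rcases Nat.lt_or_ge n i with h' | h'
      · rw [ih i h', ih (i+1) hi]; ring
      · have : n = i := by omega
        rw [ih (i+1) hi, this]; simp

lemma eAux_gt_M (q : ℂ) (n : ℕ) : ∀ M i, M < i → eAux q n M i = 0 := by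
  intro M
  induction M with
  | zero => intro i hi; simp [eAux]; omega
  | succ M ih =>
    intro i hi
    match i, hi with
    | (i+1), hi =>
      rw [eAux, ih i (by omega), ih (i+1) (by omega)]; ring

lemma eAux_closed {q : ℂ} (hq1 : ‖q‖ < 1) (n : ℕ) :
    ∀ M i k, i + k = M → i ≤ n →
    eAux q n M i * (qPoch q q i * qPoch q q (n-i) * qPoch q q k)
      = qPoch q q M * qPoch q q n * qPoch q (q^n) k := by
  intro M
  induction M with
  | zero =>
    intro i k hik _
    obtain ⟨rfl, rfl⟩ : i = 0 ∧ k = 0 := by omega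
    simp [eAux, qPoch_zero]
  | succ M ih =>
    intro i k hik hin
    match i, hik, hin with
    | 0, hik, hin =>
      have hk : k = M + 1 := by omega
      subst hk
      have IH0 := ih 0 M (by omega) (Nat.zero_le n)
      simp only [qPoch_zero, Nat.sub_zero, one_mul] at IH0 ⊢
      rw [eAux, qPoch_succ q q M, qPoch_succ q (q^n) M, pow_add]
      linear_combination ((1 - q^n*q^M) * (1 - q*q^M)) * IH0
    | (i'+1), hik, hin =>
      match k, hik with
      | 0, hik =>
        have hiM : i' = M := by omega
        subst hiM
        obtain ⟨b, rfl⟩ : ∃ b, n = i' + 1 + b := ⟨n - (i'+1), by omega⟩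
        have IH := ih i' 0 rfl (by omega)
        rw [eAux, eAux_gt_M q _ i' (i'+1) (by omega)]
        simp only [qPoch_zero, mul_one, mul_zero, zero_mul, add_zero, zero_add] at IH ⊢
        have h1 : i' + 1 + b - i' = b + 1 := by omega
        have h2 : i' + 1 + b - (i' + 1) = b := by omega
        rw [h1] at IH ⊢
        rw [h2]
        rw [qPoch_succ q q b] at IH
        rw [qPoch_succ q q i']
        linear_combination (1 - q*q^i') * IH
      | (k'+1), hik =>
        obtain ⟨b, rfl⟩ : ∃ b, n = i' + 1 + b := ⟨n - (i'+1), by omega⟩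
        have hM : M = i' + k' + 1 := by omega
        subst hM
        have IH1 := ih i' (k'+1) (by omega) (by omega)
        have IH2 := ih (i'+1) k' (by omega) (by omega)
        have h1 : i' + 1 + b - i' = b + 1 := by omega
        have h2 : i' + 1 + b - (i' + 1) = b := by omega
        have h3 : i' + 1 + b + (i' + k' + 1) - (i' + 1) = i' + b + k' + 1 := by omega
        rw [h1, qPoch_succ q q b, qPoch_succ q q k', qPoch_succ q (q^(i'+1+b)) k'] at IH1
        rw [h2, qPoch_succ q q i'] at IH2
        rw [eAux, h1, h2, h3]
        rw [qPoch_succ q q (i'+k'+1), qPoch_succ q q i', qPoch_succ q q k',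
          qPoch_succ q (q^(i'+1+b)) k']
        linear_combination (1 - q*q^i') * IH1
          + (q*q^i' * (1 - q*q^i'*q^b*q^k') * (1 - q*q^k')) * IH2
lemma Dq_iter {q a : ℂ} (hq : q ≠ 0) (n : ℕ) (M : ℕ) :
    ∀ x : ℂ, x ≠ 0 → (∀ j : ℕ, 1 - a * q ^ j * x ≠ 0) →
    (Dq q)^[M] (fun t => t ^ n / qPoch q (a * t) n) x
      = (∑ i ∈ Finset.range (n+1), eAux q n M i * a^(M-i) * x^(n-i) * qPoch q (a*x) i)
          / qPoch q (a*x) (n+M) := by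
  induction M with
  | zero =>
    intro x hx hhx
    simp only [Function.iterate_zero, id_eq, Nat.add_zero]
    congr 1
    rw [Finset.sum_eq_single 0]
    · simp [eAux, qPoch_zero]
    · intro i _ hi
      have : eAux q n 0 i = 0 := by simp [eAux, hi]
      rw [this]; ring
    · intro habs; exact absurd (Finset.mem_range.mpr (Nat.succ_pos n)) habs
  | succ M ih =>
    intro x hx hhx
    have hqx : q * x ≠ 0 := mul_ne_zero hq hx
    have hhqx : ∀ j, 1 - a * q ^ j * (q * x) ≠ 0 := by
      intro j
      have h2 := hhx (j+1)
      have : a * q ^ j * (q * x) = a * q ^ (j+1) * x := by rw [pow_succ]; ring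
      rw [this]; exact h2
    have hP : ∀ k, qPoch q (a*x) k ≠ 0 := qPoch_ax_ne_zero hhx
    have hP' : ∀ k, qPoch q (a*(q*x)) k ≠ 0 := qPoch_ax_ne_zero hhqx
    have hax : (1 : ℂ) - a*x ≠ 0 := by
      have := hhx 0; rwa [pow_zero, mul_one] at this
    have hshift : ∀ m : ℕ, qPoch q (a*x) (m+1) = qPoch q (a*(q*x)) m * (1 - a*x) := by
      intro m
      rw [qPoch_shift q (a*x) m]
      have : a*x*q = a*(q*x) := by ring
      rw [this]
    have hsucc : ∀ m : ℕ, qPoch q (a*x) (m+1) = qPoch q (a*x) m * (1 - a*x*q^m) :=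
      fun m => qPoch_succ q (a*x) m
    rw [Function.iterate_succ_apply']
    show ((Dq q)^[M] (fun t => t ^ n / qPoch q (a * t) n) x
      - (Dq q)^[M] (fun t => t ^ n / qPoch q (a * t) n) (q*x)) / x = _
    rw [ih x hx hhx, ih (q*x) hqx hhqx]
    have hc : (1 : ℂ) - a*x*q^(n+M) ≠ 0 := by
      have := hhx (n+M)
      have h2 : (1 : ℂ) - a*x*q^(n+M) = 1 - a*q^(n+M)*x := by ring
      rwa [h2]
    have hnm1 : n + (M+1) = (n+M)+1 := rfl
    rw [hnm1]
    -- rewrite first fraction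
    have E1 : (∑ i ∈ Finset.range (n+1), eAux q n M i * a^(M-i) * x^(n-i) * qPoch q (a*x) i)
          / qPoch q (a*x) (n+M)
        = (∑ i ∈ Finset.range (n+1), eAux q n M i * a^(M-i) * x^(n-i) * qPoch q (a*x) i)
            * (1 - a*x*q^(n+M)) / qPoch q (a*x) ((n+M)+1) := by
      rw [hsucc (n+M), mul_div_mul_right _ _ hc]
    have E2 : (∑ i ∈ Finset.range (n+1), eAux q n M i * a^(M-i) * (q*x)^(n-i) * qPoch q (a*(q*x)) i)
          / qPoch q (a*(q*x)) (n+M)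
        = (∑ i ∈ Finset.range (n+1),
            eAux q n M i * a^(M-i) * q^(n-i) * x^(n-i) * qPoch q (a*x) (i+1))
            / qPoch q (a*x) ((n+M)+1) := by
      rw [hshift (n+M)]
      have h3 : (∑ i ∈ Finset.range (n+1),
            eAux q n M i * a^(M-i) * q^(n-i) * x^(n-i) * qPoch q (a*x) (i+1))
          = (∑ i ∈ Finset.range (n+1), eAux q n M i * a^(M-i) * (q*x)^(n-i) * qPoch q (a*(q*x)) i)
            * (1 - a*x) := by
        rw [Finset.sum_mul]
        refine Finset.sum_congr rfl fun i _ => ?_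
        rw [mul_pow, hshift i]
        ring
      rw [h3, mul_div_mul_right _ _ hax]
    rw [E1, E2, div_sub_div_same, div_div]
    have key : (∑ i ∈ Finset.range (n+1), eAux q n M i * a^(M-i) * x^(n-i) * qPoch q (a*x) i)
            * (1 - a*x*q^(n+M))
          - (∑ i ∈ Finset.range (n+1),
              eAux q n M i * a^(M-i) * q^(n-i) * x^(n-i) * qPoch q (a*x) (i+1))
        = x * ∑ i ∈ Finset.range (n+1),
            eAux q n (M+1) i * a^(M+1-i) * x^(n-i) * qPoch q (a*x) i := by
      rw [Finset.sum_mul, ← Finset.sum_sub_distrib]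
      have hsplit : ∀ i ∈ Finset.range (n+1),
          eAux q n M i * a^(M-i) * x^(n-i) * qPoch q (a*x) i * (1 - a*x*q^(n+M))
            - eAux q n M i * a^(M-i) * q^(n-i) * x^(n-i) * qPoch q (a*x) (i+1)
          = eAux q n M i * (1 - q^(n-i)) * a^(M-i) * x^(n-i) * qPoch q (a*x) (i+1)
            + x * (eAux q n M i * q^i * (1 - q^(n+M-i)) * a^(M+1-i) * x^(n-i) * qPoch q (a*x) i) := by
        intro i hi
        have hin : i ≤ n := by simpa using Nat.lt_succ_iff.mp (Finset.mem_range.mp hi)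
        by_cases hiM : i ≤ M
        · obtain ⟨d, rfl⟩ : ∃ d, M = i + d := ⟨M - i, by omega⟩
          obtain ⟨c, rfl⟩ : ∃ c, n = i + c := ⟨n - i, by omega⟩
          have r1 : i + c - i = c := by omega
          have r2 : i + c + (i + d) - i = i + c + d := by omega
          have r3 : i + d - i = d := by omega
          have r4 : i + d + 1 - i = d + 1 := by omega
          rw [r1, r2, r3, r4, hsucc i]
          simp only [pow_add]
          ring
        · push_neg at hiM
          rw [eAux_gt_M q n M i hiM]
          ring
      rw [Finset.sum_congr rfl hsplit, Finset.sum_add_distrib]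
      have hUn : eAux q n M n * (1 - q^(n-n)) * a^(M-n) * x^(n-n) * qPoch q (a*x) (n+1) = 0 := by
        simp [Nat.sub_self]
      rw [Finset.sum_range_succ
        (fun i => eAux q n M i * (1 - q^(n-i)) * a^(M-i) * x^(n-i) * qPoch q (a*x) (i+1)) n,
        hUn, add_zero, Finset.mul_sum]
      rw [Finset.sum_range_succ'
        (fun i => x * (eAux q n (M+1) i * a^(M+1-i) * x^(n-i) * qPoch q (a*x) i)) n]
      rw [Finset.sum_range_succ'
        (fun i => x * (eAux q n M i * q^i * (1 - q^(n+M-i)) * a^(M+1-i) * x^(n-i) * qPoch q (a*x) i)) n]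
      have hW0 : x * (eAux q n (M+1) 0 * a^(M+1-0) * x^(n-0) * qPoch q (a*x) 0)
          = x * (eAux q n M 0 * q^0 * (1 - q^(n+M-0)) * a^(M+1-0) * x^(n-0) * qPoch q (a*x) 0) := by
        simp only [Nat.sub_zero]
        rw [eAux, pow_add]; ring
      rw [hW0, ← add_assoc, ← Finset.sum_add_distrib]
      have hmatch : ∀ i ∈ Finset.range n,
          (eAux q n M i * (1 - q^(n-i)) * a^(M-i) * x^(n-i) * qPoch q (a*x) (i+1)
           + x * (eAux q n M (i+1) * q^(i+1) * (1 - q^(n+M-(i+1))) * a^(M+1-(i+1)) * x^(n-(i+1))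
               * qPoch q (a*x) (i+1)))
          = x * (eAux q n (M+1) (i+1) * a^(M+1-(i+1)) * x^(n-(i+1)) * qPoch q (a*x) (i+1)) := by
        intro i hi
        have hin : i < n := Finset.mem_range.mp hi
        rw [eAux]
        have r5 : n - i = (n - (i+1)) + 1 := by omega
        have r6 : M + 1 - (i + 1) = M - i := by omega
        rw [r6, r5, pow_succ x (n - (i+1))]
        ring
      rw [Finset.sum_congr rfl hmatch]
    rw [key]
    rw [mul_comm (qPoch q (a*x) ((n+M)+1)) x, ← div_div, mul_div_cancel_left₀ _ hx]
lemma choose_two_succ (m : ℕ) : (m+1).choose 2 = m.choose 2 + m := by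
  have h := Nat.choose_succ_succ m 1
  norm_num at h
  omega

lemma inner_summable {q a x u y : ℂ} (hq1 : ‖q‖ < 1)
    (hu : ‖u‖ ≤ 1) (hay : ‖a * y‖ < 1)
    (h : ∀ j : ℕ, 1 - a * q ^ j * x ≠ 0) (n i : ℕ) :
    Summable fun m : ℕ => u ^ (m.choose 2) * qPoch q (q ^ n) m * (u ^ i * a * y) ^ m /
      (qPoch q q m * qPoch q (a * q ^ (n + i) * x) m) := by
  have hqq : ∀ m, qPoch q q m ≠ 0 := qq_ne_zero hq1
  have haxne : ∀ m, qPoch q (a * q ^ (n + i) * x) m ≠ 0 := qPoch_x_ne_zero h (n+i)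
  have hden1 : ∀ m : ℕ, (1:ℂ) - q*q^m ≠ 0 := by
    intro m
    have h2 := hqq (m+1)
    rw [qPoch_succ] at h2
    exact (mul_ne_zero_iff.mp h2).2
  have hden2 : ∀ m : ℕ, (1:ℂ) - a*q^(n+i)*x*q^m ≠ 0 := by
    intro m
    have h2 : (1:ℂ) - a*q^(n+i)*x*q^m = 1 - a*q^(n+i+m)*x := by rw [pow_add]; ring
    rw [h2]; exact h _
  set σ : ℕ → ℂ := fun m => ((1 - q^n*q^m) * (a*y)) / ((1 - q*q^m) * (1 - a*q^(n+i)*x*q^m))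
    with hσ
  have hstep : ∀ m : ℕ,
      u ^ ((m+1).choose 2) * qPoch q (q ^ n) (m+1) * (u ^ i * a * y) ^ (m+1) /
        (qPoch q q (m+1) * qPoch q (a * q ^ (n + i) * x) (m+1))
      = (u ^ (m.choose 2) * qPoch q (q ^ n) m * (u ^ i * a * y) ^ m /
          (qPoch q q m * qPoch q (a * q ^ (n + i) * x) m)) * ((u^m * u^i) * σ m) := by
    intro m
    rw [choose_two_succ, pow_add, qPoch_succ q (q^n) m, qPoch_succ q q m,
      qPoch_succ q (a*q^(n+i)*x) m, pow_succ, hσ]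
    simp only [div_eq_mul_inv, mul_inv]
    ring
  have hqpow : Filter.Tendsto (fun m : ℕ => q^m) Filter.atTop (nhds 0) :=
    tendsto_pow_atTop_nhds_zero_of_norm_lt_one hq1
  have hnum : Filter.Tendsto (fun m : ℕ => (1 - q^n*q^m) * (a*y)) Filter.atTop (nhds (a*y)) := by
    have : Filter.Tendsto (fun m : ℕ => 1 - q^n*q^m) Filter.atTop (nhds 1) := by
      have := (hqpow.const_mul (q^n)).const_sub 1
      simpa using this
    simpa using this.mul_const (a*y)
  have hden : Filter.Tendsto (fun m : ℕ => (1 - q*q^m) * (1 - a*q^(n+i)*x*q^m))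
      Filter.atTop (nhds 1) := by
    have h1 : Filter.Tendsto (fun m : ℕ => 1 - q*q^m) Filter.atTop (nhds 1) := by
      have := (hqpow.const_mul q).const_sub 1
      simpa using this
    have h2 : Filter.Tendsto (fun m : ℕ => 1 - a*q^(n+i)*x*q^m) Filter.atTop (nhds 1) := by
      have := (hqpow.const_mul (a*q^(n+i)*x)).const_sub 1
      simpa using this
    simpa using h1.mul h2
  have hσt : Filter.Tendsto σ Filter.atTop (nhds (a*y)) := by
    have := hnum.div hden one_ne_zero
    rw [div_one] at this
    exact this
  have hσn : Filter.Tendsto (fun m => ‖σ m‖) Filter.atTop (nhds (‖a*y‖)) := by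
    exact hσt.norm
  set r : ℝ := (1 + ‖a*y‖)/2 with hr
  apply summable_of_ratio_norm_eventually_le (r := r)
  · rw [hr]; linarith
  · have hev : ∀ᶠ m in Filter.atTop, ‖σ m‖ < r := by
      apply hσn.eventually_lt_const
      rw [hr]; linarith
    filter_upwards [hev] with m hm
    rw [hstep m, norm_mul, mul_comm r]
    apply mul_le_mul_of_nonneg_left _ (norm_nonneg _)
    calc ‖u^m * u^i * σ m‖ = ‖u‖^m * ‖u‖^i * ‖σ m‖ := by rw [norm_mul, norm_mul, norm_pow, norm_pow]
      _ ≤ 1 * 1 * r := by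
          apply mul_le_mul
          · apply mul_le_mul
            · exact pow_le_one₀ (norm_nonneg u) hu
            · exact pow_le_one₀ (norm_nonneg u) hu
            · positivity
            · norm_num
          · exact hm.le
          · positivity
          · norm_num
      _ = r := by ring
noncomputable def Fterm (q a x u y : ℂ) (n : ℕ) (p : ℕ × ℕ) : ℂ :=
  if p.1 ≤ n then
    1 / qPoch q (a * x) n *
      (qBinom q n p.1 * u ^ (p.1.choose 2) *
        (qPoch q (a * x) p.1 / qPoch q (a * q ^ n * x) p.1) * x ^ (n - p.1) * y ^ p.1 *
        (u ^ (p.2.choose 2) * qPoch q (q ^ n) p.2 * (u ^ p.1 * a * y) ^ p.2 /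
          (qPoch q q p.2 * qPoch q (a * q ^ (n + p.1) * x) p.2)))
  else 0

lemma choose_two_add (i k : ℕ) : (i+k).choose 2 = i.choose 2 + k.choose 2 + i*k := by
  induction k with
  | zero => simp
  | succ k ih =>
    have h : i + (k+1) = (i+k)+1 := by omega
    rw [h, choose_two_succ, ih, choose_two_succ]
    ring

lemma term_match {q a x u y : ℂ} (hq1 : ‖q‖ < 1)
    (hhx : ∀ j : ℕ, 1 - a * q ^ j * x ≠ 0) (n i k : ℕ) (hin : i ≤ n) :
    u ^ ((i+k).choose 2) * (y ^ (i+k) / qPoch q q (i+k)) *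
      (eAux q n (i+k) i * a ^ k * x ^ (n-i) * qPoch q (a*x) i / qPoch q (a*x) (n+(i+k)))
    = Fterm q a x u y n (i, k) := by
  have hqq : ∀ m, qPoch q q m ≠ 0 := qq_ne_zero hq1
  have hsplitP : qPoch q (a*x) (n+(i+k))
      = qPoch q (a*x) n * qPoch q (a*q^n*x) i * qPoch q (a*q^(n+i)*x) k := by
    have h1 : n + (i+k) = (n+i)+k := by omega
    rw [h1, qPoch_add q (a*x) (n+i) k, qPoch_add q (a*x) n i]
    have e1 : a*x*q^n = a*q^n*x := by ring
    have e2 : a*x*q^(n+i) = a*q^(n+i)*x := by ring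
    rw [e1, e2]
  have hE : eAux q n (i+k) i
      = qPoch q q (i+k) * qPoch q q n * qPoch q (q^n) k
        / (qPoch q q i * qPoch q q (n-i) * qPoch q q k) := by
    rw [eq_div_iff (mul_ne_zero (mul_ne_zero (hqq _) (hqq _)) (hqq _))]
    exact eAux_closed hq1 n (i+k) i k rfl hin
  rw [Fterm]
  simp only [if_pos hin]
  rw [hE, choose_two_add, hsplitP]
  unfold qBinom
  have hupow : (u^i*a*y)^k = u^(i*k) * a^k * y^k := by
    rw [mul_pow, mul_pow, ← pow_mul]
  rw [hupow, pow_add y i k, pow_add u (i.choose 2 + k.choose 2) (i*k),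
    pow_add u (i.choose 2) (k.choose 2)]
  have h1 := qPoch_ax_ne_zero hhx
  have h2 := qPoch_x_ne_zero hhx n
  have h3 := qPoch_x_ne_zero hhx (n+i)
  have n1 := hqq (i+k)
  have n2 := hqq i
  have n3 := hqq (n-i)
  have n4 := hqq k
  have n5 := h1 n
  have n6 := hqq n
  have n7 : qPoch q (q^n*a*x) i ≠ 0 := by
    have h7 := h2 i
    have e7 : q^n*a*x = a*q^n*x := by ring
    rw [e7]; exact h7
  have n8 : qPoch q (q^i*q^n*a*x) k ≠ 0 := by
    have h8 := h3 k
    have e8 : q^i*q^n*a*x = a*q^(n+i)*x := by rw [pow_add]; ring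
    rw [e8]; exact h8
  simp only [div_eq_mul_inv, mul_inv]
  linear_combination (u ^ i.choose 2 * u ^ k.choose 2 * u ^ (i*k) * y^i * y^k * qPoch q q n
    * qPoch q (q^n) k * a^k * x^(n-i) * qPoch q (a*x) i * (qPoch q q i)⁻¹
    * (qPoch q q (n-i))⁻¹ * (qPoch q q k)⁻¹ * (qPoch q (a*x) n)⁻¹
    * (qPoch q (a*q^n*x) i)⁻¹ * (qPoch q (a*q^(n+i)*x) k)⁻¹) * (mul_inv_cancel₀ n1)

lemma sum_range_ext {f g : ℕ → ℂ} {A B : ℕ}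
    (h : ∀ i, i ≤ A → i ≤ B → f i = g i)
    (hf : ∀ i, i ≤ A → B < i → f i = 0)
    (hg : ∀ i, i ≤ B → A < i → g i = 0) :
    ∑ i ∈ Finset.range (A+1), f i = ∑ i ∈ Finset.range (B+1), g i := by
  rcases le_total A B with hAB | hAB
  · calc ∑ i ∈ Finset.range (A+1), f i
        = ∑ i ∈ Finset.range (A+1), g i := by
          refine Finset.sum_congr rfl fun i hi => ?_
          have := Finset.mem_range.mp hi
          exact h i (by omega) (by omega)
      _ = ∑ i ∈ Finset.range (B+1), g i := by
          refine Finset.sum_subset (Finset.range_subset_range.mpr (by omega)) fun i hi hni => ?_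
          have h1 := Finset.mem_range.mp hi
          have h2 : ¬ i < A + 1 := fun hc => hni (Finset.mem_range.mpr hc)
          exact hg i (by omega) (by omega)
  · calc ∑ i ∈ Finset.range (A+1), f i
        = ∑ i ∈ Finset.range (B+1), f i := by
          refine (Finset.sum_subset (Finset.range_subset_range.mpr (by omega)) fun i hi hni => ?_).symm
          have h1 := Finset.mem_range.mp hi
          have h2 : ¬ i < B + 1 := fun hc => hni (Finset.mem_range.mpr hc)
          exact hf i (by omega) (by omega)
      _ = ∑ i ∈ Finset.range (B+1), g i := by
          refine Finset.sum_congr rfl fun i hi => ?_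
          have := Finset.mem_range.mp hi
          exact h i (by omega) (by omega)

lemma sum_match {q a x u y : ℂ} (hq1 : ‖q‖ < 1)
    (hhx : ∀ j : ℕ, 1 - a * q ^ j * x ≠ 0) (n M : ℕ) :
    u ^ (M.choose 2) * (y ^ M / qPoch q q M) *
      ((∑ i ∈ Finset.range (n+1), eAux q n M i * a^(M-i) * x^(n-i) * qPoch q (a*x) i)
        / qPoch q (a*x) (n+M))
    = ∑ p ∈ Finset.HasAntidiagonal.antidiagonal M, Fterm q a x u y n p := by
  rw [Finset.Nat.sum_antidiagonal_eq_sum_range_succ_mk, Finset.sum_div, Finset.mul_sum]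
  refine sum_range_ext (fun i hiA hiB => ?_) (fun i hiA hiB => ?_) (fun i hiA hiB => ?_)
  · obtain ⟨k, rfl⟩ : ∃ k, M = i + k := ⟨M - i, by omega⟩
    have hk : i + k - i = k := by omega
    rw [hk]
    exact term_match hq1 hhx n i k hiA
  · rw [eAux_gt_M q n M i hiB]
    ring
  · rw [Fterm, if_neg (by omega)]

lemma Fterm_summable {q a x u y : ℂ} (hq1 : ‖q‖ < 1) (hu : ‖u‖ ≤ 1)
    (hay : ‖a*y‖ < 1) (hhx : ∀ j : ℕ, 1 - a * q ^ j * x ≠ 0) (n : ℕ) :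
    Summable (Fterm q a x u y n) := by
  have hcol : ∀ i0 : ℕ, Summable (fun k => Fterm q a x u y n (i0, k)) := by
    intro i0
    by_cases hi : i0 ≤ n
    · have hs := inner_summable hq1 hu hay hhx n i0
      have h2 := (hs.mul_left (qBinom q n i0 * u ^ (i0.choose 2) *
        (qPoch q (a*x) i0 / qPoch q (a*q^n*x) i0) * x ^ (n-i0) * y ^ i0)).mul_left
        (1 / qPoch q (a*x) n)
      refine h2.congr fun k => ?_
      simp only [Fterm, if_pos hi]
    · refine summable_zero.congr fun k => ?_
      simp [Fterm, hi]
  have hrepr : ∀ p : ℕ×ℕ, Fterm q a x u y n p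
      = ∑ i0 ∈ Finset.range (n+1), (if p.1 = i0 then Fterm q a x u y n p else 0) := by
    intro p
    by_cases hp : p.1 ≤ n
    · rw [Finset.sum_eq_single p.1 (fun b _ hb => if_neg (fun hh => hb hh.symm))
        (fun hnm => absurd (Finset.mem_range.mpr (by omega)) hnm)]
      simp
    · have h0 : Fterm q a x u y n p = 0 := by simp [Fterm, hp]
      rw [h0]
      refine (Finset.sum_eq_zero fun i0 _ => ?_).symm
      simp
  refine Summable.congr ?_ (fun p => (hrepr p).symm)
  apply summable_sum
  intro i0 _
  have hinj : Function.Injective (fun k : ℕ => ((i0, k) : ℕ×ℕ)) := by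
    intro a b hab
    simpa using congrArg Prod.snd hab
  refine (Function.Injective.summable_iff hinj ?_).mp ?_
  · intro p hp
    rw [if_neg]
    intro hpe
    exact hp ⟨p.2, by simp [← hpe]⟩
  · refine (hcol i0).congr fun k => ?_
    simp [Function.comp]

theorem stmt11 (q a x u y : ℂ) (n : ℕ)
    (hq0 : 0 < ‖q‖) (hq1 : ‖q‖ < 1)
    (hu : ‖u‖ ≤ 1) (hay : ‖a * y‖ < 1) (hx : x ≠ 0)
    (h : ∀ j : ℕ, 1 - a * q ^ j * x ≠ 0) :
    (Summable fun m : ℕ =>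
        u ^ (m.choose 2) * (y ^ m / qPoch q q m) *
          ((Dq q)^[m] (fun t => t ^ n / qPoch q (a * t) n) x)) ∧
    (∀ i : ℕ, i ≤ n →
      Summable fun m : ℕ =>
        u ^ (m.choose 2) * qPoch q (q ^ n) m * (u ^ i * a * y) ^ m /
          (qPoch q q m * qPoch q (a * q ^ (n + i) * x) m)) ∧
    Tq q u y (fun t => t ^ n / qPoch q (a * t) n) x =
      1 / qPoch q (a * x) n *
        ∑ i ∈ Finset.range (n + 1),
          qBinom q n i * u ^ (i.choose 2) *
            (qPoch q (a * x) i / qPoch q (a * q ^ n * x) i) * x ^ (n - i) * y ^ i *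
            ∑' m : ℕ,
              u ^ (m.choose 2) * qPoch q (q ^ n) m * (u ^ i * a * y) ^ m /
                (qPoch q q m * qPoch q (a * q ^ (n + i) * x) m) := by
  have hq : q ≠ 0 := by
    intro h0
    rw [h0] at hq0
    simp at hq0
  have hterm : ∀ M : ℕ, u ^ (M.choose 2) * (y ^ M / qPoch q q M) *
      ((Dq q)^[M] (fun t => t ^ n / qPoch q (a * t) n) x)
      = ∑ p ∈ Finset.HasAntidiagonal.antidiagonal M, Fterm q a x u y n p := by
    intro M
    rw [Dq_iter hq n M x hx h]
    exact sum_match hq1 h n M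
  have hF : Summable (Fterm q a x u y n) := Fterm_summable hq1 hu hay h n
  have hsig : Summable (fun s : (Σ M : ℕ, (Finset.HasAntidiagonal.antidiagonal M : Finset (ℕ×ℕ))) =>
      Fterm q a x u y n (s.2 : ℕ × ℕ)) := by
    have h0 := (Finset.HasAntidiagonal.sigmaAntidiagonalEquivProd (A := ℕ)).summable_iff.mpr hF
    refine h0.congr fun s => ?_
    simp [Finset.HasAntidiagonal.sigmaAntidiagonalEquivProd]
  have hfib : ∀ M : ℕ, ∑' (p : (Finset.HasAntidiagonal.antidiagonal M : Finset (ℕ×ℕ))), Fterm q a x u y n ↑p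
      = ∑ p ∈ Finset.HasAntidiagonal.antidiagonal M, Fterm q a x u y n p :=
    fun M => Finset.tsum_subtype _ _
  have hsum2 : Summable (fun M : ℕ => ∑ p ∈ Finset.HasAntidiagonal.antidiagonal M, Fterm q a x u y n p) :=
    hsig.sigma.congr hfib
  refine ⟨hsum2.congr (fun M => (hterm M).symm), fun i _ => inner_summable hq1 hu hay h n i, ?_⟩
  have htq : Tq q u y (fun t => t ^ n / qPoch q (a * t) n) x = ∑' (p : ℕ × ℕ), Fterm q a x u y n p := by
    rw [Tq, tsum_congr hterm, tsum_congr (fun M => (hfib M).symm), ← Summable.tsum_sigma hsig,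
      ← (Finset.HasAntidiagonal.sigmaAntidiagonalEquivProd (A := ℕ)).tsum_eq (Fterm q a x u y n)]
    exact tsum_congr fun s => by simp [Finset.HasAntidiagonal.sigmaAntidiagonalEquivProd]
  rw [htq, Summable.tsum_prod hF]
  rw [tsum_eq_sum (s := Finset.range (n+1)) (f := fun i => ∑' k, Fterm q a x u y n (i, k))
    (fun i hi => ?_)]
  · rw [Finset.mul_sum]
    refine Finset.sum_congr rfl fun i hi => ?_
    have hin : i ≤ n := by
      have := Finset.mem_range.mp hi
      omega
    have hbody : ∀ k : ℕ, Fterm q a x u y n (i, k)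
        = 1 / qPoch q (a * x) n *
          ((qBinom q n i * u ^ (i.choose 2) *
            (qPoch q (a * x) i / qPoch q (a * q ^ n * x) i) * x ^ (n - i) * y ^ i) *
            (u ^ (k.choose 2) * qPoch q (q ^ n) k * (u ^ i * a * y) ^ k /
              (qPoch q q k * qPoch q (a * q ^ (n + i) * x) k))) := by
      intro k
      rw [Fterm, if_pos hin]
    rw [tsum_congr hbody, tsum_mul_left, tsum_mul_left]
  · -- i ∉ range (n+1): tsum is 0
    have hni : ¬ i ≤ n := by
      intro hc
      exact hi (Finset.mem_range.mpr (by omega))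
    have hzz : ∀ k : ℕ, Fterm q a x u y n (i, k) = 0 := fun k => by
      rw [Fterm, if_neg hni]
    show (∑' k : ℕ, Fterm q a x u y n (i, k)) = 0
    rw [tsum_congr hzz, tsum_zero]
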